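/- Let H be a group with pairwise distinct normal subgroups K₁, …, K_k such that each quotient H/Kᵢ is isomorphic to a non-abelian simple group Gᵢ. Then the quotient of H by the intersection K = K₁ ∩ ⋯ ∩ K_k is isomorphic to the direct product G₁ × ⋯ × G_k. -/

import Mathlib

/-- Lemma 5.1: if `H` has pairwise distinct normal subgroups `K i` each with quotient
isomorphic to a non-abelian simple group `G i`, then `H / ⋂ K i ≅ ∏ G i`. -/
theorem stmt_0 {H : Type*} [Group H] {k : ℕ} (K : Fin k → Subgroup H)
    (hnorm : ∀ i, (K i).Normal) (hdist : Function.Injective K)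
    (G : Fin k → Type*) [∀ i, Group (G i)]
    (hsimple : ∀ i, IsSimpleGroup (G i))
    (hnonab : ∀ i, ¬ ∀ x y : G i, x * y = y * x)
    (hquot : ∀ i, Nonempty ((H ⧸ K i) ≃* G i))
    [hN : (⨅ i, K i).Normal] :
    Nonempty ((H ⧸ ⨅ i, K i) ≃* (∀ i, G i)) := by
  classical
  -- each quotient is a simple group
  have hSQ : ∀ i, IsSimpleGroup (H ⧸ K i) := by
    intro i
    obtain ⟨e⟩ := hquot i
    haveI := hsimple i
    haveI : Nontrivial (H ⧸ K i) := e.toEquiv.nontrivial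
    exact IsSimpleGroup.isSimpleGroup_of_surjective e.symm.toMonoidHom e.symm.surjective
  -- each quotient is non-abelian
  have hnab : ∀ i, ¬ ∀ x y : H ⧸ K i, x * y = y * x := by
    intro i hc
    obtain ⟨e⟩ := hquot i
    refine hnonab i fun x y => ?_
    have := congrArg e (hc (e.symm x) (e.symm y))
    simpa using this
  -- K i is not the whole group
  have hKne : ∀ i, K i ≠ ⊤ := by
    intro i hi
    haveI := hSQ i
    haveI := hnorm i
    have hs : Subsingleton (H ⧸ K i) := hi ▸ QuotientGroup.subsingleton_quotient_top
    exact not_subsingleton (H ⧸ K i) hs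
  -- key dichotomy from simplicity
  have L1 : ∀ i (A : Subgroup H), A.Normal → A ≤ K i ∨ A ⊔ K i = ⊤ := by
    intro i A hA
    haveI := hnorm i
    set Q := QuotientGroup.mk' (K i)
    have hQs : Function.Surjective Q := QuotientGroup.mk'_surjective (K i)
    haveI := hSQ i
    rcases (hA.map Q hQs).eq_bot_or_eq_top with hb | ht
    · left
      have := (Subgroup.map_eq_bot_iff A).mp hb
      rwa [QuotientGroup.ker_mk'] at this
    · right
      have h1 : Subgroup.comap Q (Subgroup.map Q A) = A ⊔ Q.ker := Subgroup.comap_map_eq Q A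
      rw [ht, QuotientGroup.ker_mk'] at h1
      rw [← h1]
      exact Subgroup.comap_top Q
  -- distinct ones are comaximal
  have L3 : ∀ i j, i ≠ j → K j ⊔ K i = ⊤ := by
    intro i j hij
    rcases L1 i (K j) (hnorm j) with hle | h
    · rcases L1 j (K i) (hnorm i) with hle' | h'
      · exact absurd (hdist (le_antisymm hle hle')) (Ne.symm hij)
      · have : K i = ⊤ := by
          rw [← h']
          exact (sup_eq_left.mpr hle).symm
        exact absurd this (hKne i)
    · exact h
  -- finite infima of the K's are normal
  have hNormS : ∀ S : Finset (Fin k), (⨅ j ∈ S, K j).Normal := by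
    intro S
    constructor
    intro n hn g
    simp only [Subgroup.mem_iInf] at hn ⊢
    intro j hj
    exact (hnorm j).conj_mem n (hn j hj) g
  -- image of a subgroup under mk' (K i) is ⊤ iff sup with K i is ⊤
  have hmaptop : ∀ i (A : Subgroup H), A ⊔ K i = ⊤ →
      Subgroup.map (QuotientGroup.mk' (K i) (nN := hnorm i)) A = ⊤ := by
    intro i A h
    haveI := hnorm i
    set Q := QuotientGroup.mk' (K i)
    have hQs : Function.Surjective Q := QuotientGroup.mk'_surjective (K i)
    have : Subgroup.map Q (A ⊔ K i) = ⊤ := by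
      rw [h]; exact Subgroup.map_top_of_surjective Q hQs
    rw [Subgroup.map_sup] at this
    have hb : Subgroup.map Q (K i) = ⊥ := by
      rw [Subgroup.map_eq_bot_iff, QuotientGroup.ker_mk']
    rw [hb, sup_bot_eq] at this
    exact this
  -- commutator membership helpers
  have hconj : ∀ (A : Subgroup H), A.Normal → ∀ a b : H, a ∈ A → a⁻¹ * b⁻¹ * a * b ∈ A := by
    intro A hA a b haA
    have h1 := hA.conj_mem a haA b⁻¹
    rw [inv_inv] at h1
    have h2 := mul_mem (inv_mem haA) h1
    simpa [mul_assoc] using h2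
  have hconj' : ∀ (A : Subgroup H), A.Normal → ∀ a b : H, b ∈ A → a⁻¹ * b⁻¹ * a * b ∈ A := by
    intro A hA a b hbA
    have h1 := hA.conj_mem b⁻¹ (inv_mem hbA) a⁻¹
    rw [inv_inv] at h1
    have h2 := mul_mem h1 hbA
    simpa [mul_assoc] using h2
  -- main lemma: intersection over S avoiding i is comaximal with K i
  have L4 : ∀ i (S : Finset (Fin k)), i ∉ S → (⨅ j ∈ S, K j) ⊔ K i = ⊤ := by
    intro i S
    induction S using Finset.induction_on with
    | empty => intro _; simp
    | insert s S' hsS ih =>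
      intro hiS
      have his : i ≠ s := fun h => hiS (by rw [h]; exact Finset.mem_insert_self s S')
      have hiS' : i ∉ S' := fun h => hiS (Finset.mem_insert_of_mem h)
      have IH := ih hiS'
      rcases L1 i (⨅ j ∈ insert s S', K j) (hNormS (insert s S')) with hle | h
      · -- contradiction: quotient would be abelian
        exfalso
        haveI := hnorm i
        set Q := QuotientGroup.mk' (K i) with hQ
        have hmapN : Subgroup.map Q (⨅ j ∈ S', K j) = ⊤ := hmaptop i _ IH
        have hmapS : Subgroup.map Q (K s) = ⊤ := hmaptop i _ (L3 i s his)
        refine hnab i fun x y => ?_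
        have hx : x ∈ Subgroup.map Q (⨅ j ∈ S', K j) := by rw [hmapN]; trivial
        have hy : y ∈ Subgroup.map Q (K s) := by rw [hmapS]; trivial
        obtain ⟨a, ha, rfl⟩ := hx
        obtain ⟨b, hb, rfl⟩ := hy
        have hcomm : a⁻¹ * b⁻¹ * a * b ∈ K i := by
          apply hle
          simp only [SetLike.mem_coe, Subgroup.mem_iInf] at ha ⊢
          intro j hj
          rcases Finset.mem_insert.mp hj with rfl | hj'
          · exact hconj' (K j) (hnorm j) a b hb
          · exact hconj (K j) (hnorm j) a b (ha j hj')
        have h1 : Q (a⁻¹ * b⁻¹ * a * b) = 1 := by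
          rw [← QuotientGroup.ker_mk' (K i)] at hcomm
          exact hcomm
        have h2 : (Q a)⁻¹ * (Q b)⁻¹ * Q a * Q b = 1 := by
          simpa [map_mul, map_inv] using h1
        have h3 : Q b * Q a * ((Q a)⁻¹ * (Q b)⁻¹ * Q a * Q b) = Q a * Q b := by group
        rw [h2, mul_one] at h3
        exact h3.symm
      · exact h
  -- the canonical map to the product of quotients
  let Q : ∀ i, H →* H ⧸ K i := fun i => QuotientGroup.mk' (K i) (nN := hnorm i)
  let φ : H →* ∀ i, H ⧸ K i := Pi.monoidHom Q
  have hker : φ.ker = ⨅ i, K i := by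
    ext h
    simp only [MonoidHom.mem_ker, Subgroup.mem_iInf]
    constructor
    · intro hh i
      have h1 : Q i h = 1 := congrFun hh i
      rw [← QuotientGroup.ker_mk' (K i) (nN := hnorm i)]
      exact MonoidHom.mem_ker.mpr h1
    · intro hh
      funext i
      show Q i h = 1
      rw [← MonoidHom.mem_ker, QuotientGroup.ker_mk']
      exact hh i
  have hsurj : Function.Surjective φ := by
    intro x
    have : x ∈ φ.range := by
      apply Subgroup.pi_mem_of_mulSingle_mem
      intro i
      have hM : Subgroup.map (QuotientGroup.mk' (K i) (nN := hnorm i))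
          (⨅ j ∈ Finset.univ.erase i, K j) = ⊤ :=
        hmaptop i _ (L4 i _ (Finset.notMem_erase i _))
      have hx : x i ∈ Subgroup.map (QuotientGroup.mk' (K i) (nN := hnorm i))
          (⨅ j ∈ Finset.univ.erase i, K j) := by rw [hM]; trivial
      obtain ⟨a, ha, hQa⟩ := hx
      refine ⟨a, ?_⟩
      funext j
      by_cases hji : j = i
      · subst hji
        rw [Pi.mulSingle_eq_same]
        exact hQa
      · have haj : a ∈ K j := by
          simp only [SetLike.mem_coe, Subgroup.mem_iInf] at ha
          exact ha j (Finset.mem_erase.mpr ⟨hji, Finset.mem_univ j⟩)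
        have : Q j a = 1 := by
          rw [← MonoidHom.mem_ker, QuotientGroup.ker_mk']
          exact haj
        simp [Pi.mulSingle, Function.update, hji]
        exact this
    obtain ⟨a, ha⟩ := this
    exact ⟨a, ha⟩
  haveI : φ.ker.Normal := MonoidHom.normal_ker φ
  exact ⟨((QuotientGroup.quotientMulEquivOfEq hker.symm).trans
    (QuotientGroup.quotientKerEquivOfSurjective φ hsurj)).trans
    (MulEquiv.piCongrRight fun i => (hquot i).some)⟩
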